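/- Let n > 1 be an integer, let u be an integer with gcd(u, n) = 1, and let a, b be integers with gcd(a, n) = gcd(b, n). Then the elements α and β of B(ℤ_n) defined by α(x) = u·x + a and β(x) = u·x + b are conjugate in the group B(ℤ_n). -/

import Mathlib

open Polynomial

/-- The group `B_x(R)` of `R`-automorphisms of `R[x]` of basic form
`x ↦ u·x + a` with `u` a unit of `R` and `a ∈ R`. -/
def Bx (R : Type*) [CommRing R] : Subgroup (R[X] ≃ₐ[R] R[X]) where
  carrier := {σ | ∃ u : Rˣ, ∃ a : R, σ X = C (u : R) * X + C a}
  one_mem' := ⟨1, 0, by simp⟩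
  mul_mem' := by
    rintro σ τ ⟨u, a, hu⟩ ⟨v, b, hv⟩
    refine ⟨u * v, (v : R) * a + b, ?_⟩
    show σ (τ X) = _
    rw [hv, map_add, map_mul, ← Polynomial.algebraMap_eq, AlgEquiv.commutes,
      AlgEquiv.commutes, Polynomial.algebraMap_eq, hu]
    push_cast
    simp only [C_mul, C_add]
    ring
  inv_mem' := by
    rintro σ ⟨u, a, hu⟩
    refine ⟨u⁻¹, -(((u⁻¹ : Rˣ) : R) * a), ?_⟩
    show σ.symm X = _
    have h : σ.symm (σ X) = X := σ.symm_apply_apply X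
    rw [hu, map_add, map_mul, ← Polynomial.algebraMap_eq, AlgEquiv.commutes,
      AlgEquiv.commutes, Polynomial.algebraMap_eq] at h
    have key : C ((u⁻¹ : Rˣ) : R) * C ((u : Rˣ) : R) = 1 := by
      rw [← C_mul]; simp
    rw [C_neg, C_mul]
    linear_combination C ((u⁻¹ : Rˣ) : R) * h - σ.symm X * key


lemma exists_unit_mul_eq (n : ℕ) (hn : n ≠ 0) (a b : ℤ) (hab : Int.gcd a n = Int.gcd b n) :
    ∃ v : (ZMod n)ˣ, (v : ZMod n) * (a : ZMod n) = (b : ZMod n) := by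
  set d : ℕ := Int.gcd a n with hd
  have hd0 : 0 < d := by
    rw [hd, Int.gcd_pos_iff]
    exact Or.inr (by exact_mod_cast hn)
  obtain ⟨a', ha'⟩ : (d : ℤ) ∣ a := Int.gcd_dvd_left a n
  obtain ⟨b', hb'⟩ : (d : ℤ) ∣ b := hab ▸ Int.gcd_dvd_left b n
  obtain ⟨n', hn'⟩ : d ∣ n := by
    have : (d : ℤ) ∣ (n : ℤ) := Int.gcd_dvd_right a n
    exact_mod_cast this
  have hn'0 : n' ≠ 0 := by rintro rfl; exact hn (by simp [hn'])
  haveI : NeZero n := ⟨hn⟩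
  haveI : NeZero n' := ⟨hn'0⟩
  have key : ∀ x x' : ℤ, Int.gcd x n = d → x = d * x' → Int.gcd x' n' = 1 := by
    intro x x' hx hx'
    have h1 : Int.gcd ((d:ℤ) * x') ((d:ℤ) * n') = d * Int.gcd x' n' := by
      rw [Int.gcd_mul_left, Int.natAbs_natCast]
    rw [← hx', ← Nat.cast_mul, ← hn'] at h1
    have h2 : d * Int.gcd x' n' = d * 1 := by rw [mul_one, ← h1, hx]
    exact Nat.eq_of_mul_eq_mul_left hd0 h2
  have copa : Int.gcd a' n' = 1 := key a a' hd.symm ha'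
  have copb : Int.gcd b' n' = 1 := key b b' hab.symm hb'
  -- units in ZMod n'
  have hua : IsUnit ((a' : ZMod n')) := by
    have := (Int.isCoprime_iff_gcd_eq_one.mpr copa).map (Int.castRingHom (ZMod n'))
    simp only [map_intCast, map_natCast] at this
    simp only [map_natCast, ZMod.natCast_self] at this
    exact isCoprime_zero_right.mp this
  have hub : IsUnit ((b' : ZMod n')) := by
    have := (Int.isCoprime_iff_gcd_eq_one.mpr copb).map (Int.castRingHom (ZMod n'))
    simp only [map_natCast, ZMod.natCast_self] at this
    exact isCoprime_zero_right.mp this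
  have hdvd : n' ∣ n := ⟨d, by rw [hn', mul_comm]⟩
  obtain ⟨v, hv⟩ := ZMod.unitsMap_surjective hdvd (hub.unit * hua.unit⁻¹)
  refine ⟨v, ?_⟩
  -- castHom image of v
  have hv' : ZMod.castHom hdvd (ZMod n') (v : ZMod n) = (b' : ZMod n') * ((hua.unit⁻¹ : (ZMod n')ˣ) : ZMod n') := by
    rw [ZMod.unitsMap_def, ← Units.val_inj, Units.coe_map] at hv
    simpa [hub.unit_spec] using hv
  -- key divisibility: for x : ZMod n, castHom x = 0 → d * x = 0
  have hzero : ∀ x : ZMod n, ZMod.castHom hdvd (ZMod n') x = 0 → (d : ZMod n) * x = 0 := by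
    intro x hx
    have hx2 : ((x.val : ℕ) : ZMod n') = 0 := by
      rwa [← map_natCast (ZMod.castHom hdvd (ZMod n')) x.val, ZMod.natCast_zmod_val]
    obtain ⟨k, hk⟩ := (ZMod.natCast_eq_zero_iff _ _).mp hx2
    have : (d : ZMod n) * x = ((d * x.val : ℕ) : ZMod n) := by
      push_cast
      rw [ZMod.natCast_zmod_val]
    rw [this, ZMod.natCast_eq_zero_iff, hk, hn']
    exact ⟨k, by ring⟩
  have hmain : (d : ZMod n) * ((v : ZMod n) * (a' : ZMod n) - (b' : ZMod n)) = 0 := by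
    apply hzero
    rw [map_sub, map_mul, hv', map_intCast, map_intCast]
    have h1 : (hua.unit : ZMod n') * ((hua.unit⁻¹ : (ZMod n')ˣ) : ZMod n') = 1 := hua.unit.mul_inv
    rw [hua.unit_spec] at h1
    linear_combination (b' : ZMod n') * h1
  have : ((b : ℤ) : ZMod n) = (d : ZMod n) * (b' : ZMod n) := by rw [hb']; push_cast; ring
  rw [this, ha']
  push_cast
  linear_combination hmain

/-- Theorem: in `B(ℤ_n)`, `α(x) = u·x + a` and `β(x) = u·x + b` are conjugate
whenever `gcd(a,n) = gcd(b,n)`. -/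
theorem zmodn_conjugate_of_gcd_eq (n : ℕ) (hn : 1 < n) (u a b : ℤ)
    (hu : Int.gcd u n = 1) (hab : Int.gcd a n = Int.gcd b n)
    (α β : (ZMod n)[X] ≃ₐ[ZMod n] (ZMod n)[X])
    (hα : α X = C ((u : ZMod n)) * X + C ((a : ZMod n)))
    (hβ : β X = C ((u : ZMod n)) * X + C ((b : ZMod n))) :
    ∃ g ∈ Bx (ZMod n), β = g⁻¹ * α * g := by
  obtain ⟨v, hv⟩ := exists_unit_mul_eq n (by omega) a b hab
  letI : Invertible ((v : ZMod n)) := v.invertible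
  set g : (ZMod n)[X] ≃ₐ[ZMod n] (ZMod n)[X] := algEquivCMulXAddC ((v : ZMod n)) 0 with hg
  have hgX : g X = C ((v : ZMod n)) * X := by
    simp [hg, algEquivCMulXAddC, algEquivOfCompEqX]
  have hgmem : g ∈ Bx (ZMod n) := ⟨v, 0, by rw [hgX]; simp⟩
  refine ⟨g, hgmem, ?_⟩
  have hinvX : g.symm X = C (⅟ ((v : ZMod n))) * X := by
    simp [hg, algEquivCMulXAddC, algEquivOfCompEqX]
  have hC : ∀ (σ : (ZMod n)[X] ≃ₐ[ZMod n] (ZMod n)[X]) (c : ZMod n), σ (C c) = C c := by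
    intro σ c
    rw [← Polynomial.algebraMap_eq, AlgEquiv.commutes, Polynomial.algebraMap_eq]
  have key : (g⁻¹ * α * g) X = C ((u : ZMod n)) * X + C ((b : ZMod n)) := by
    show g.symm (α (g X)) = _
    rw [hgX, map_mul, hC, hα, map_mul, hC, map_add, map_mul, hC, hC, hinvX]
    have h1 : C ((v : ZMod n)) * C (⅟ ((v : ZMod n))) = 1 := by
      rw [← C_mul, mul_invOf_self, C_1]
    have h2 : C ((v : ZMod n)) * C ((a : ZMod n)) = C ((b : ZMod n)) := by
      rw [← C_mul, hv]
    linear_combination (C ((u : ZMod n)) * X) * h1 + h2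
  have : β.toAlgHom = (g⁻¹ * α * g).toAlgHom := by
    apply Polynomial.algHom_ext
    rw [AlgEquiv.toAlgHom_eq_coe, AlgEquiv.toAlgHom_eq_coe]
    show β X = (g⁻¹ * α * g) X
    rw [hβ, key]
  exact AlgEquiv.ext fun p => DFunLike.congr_fun this p
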